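/- arXiv:1402.3643 — 7 statements merged into one kernel-verified Lean document; each statement's English description precedes it below -/
import Mathlib

section
/- For every real t ≥ 8, ∑_{k=0}^{∞} (e^{-t} t^k / k!) · 2^{-k/2} ≤ 2^{-t/4} + 2^{-t/8}. -/
open NormedSpace in
/-- For every real `t ≥ 8`,
`∑_{k=0}^∞ (e^{-t} t^k / k!) · 2^{-k/2} ≤ 2^{-t/4} + 2^{-t/8}`. -/
theorem poisson_halving_bound (t : ℝ) (ht : 8 ≤ t) :
    ∑' k : ℕ, Real.exp (-t) * t ^ k / k.factorial * (2 : ℝ) ^ (-(k : ℝ) / 2)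
      ≤ (2 : ℝ) ^ (-t / 4) + (2 : ℝ) ^ (-t / 8) := by
  set c : ℝ := (2 : ℝ) ^ (-(1:ℝ)/2) with hc
  have hcpos : 0 < c := Real.rpow_pos_of_pos (by norm_num) _
  have hcsq : c ^ 2 = 1 / 2 := by
    rw [hc, ← Real.rpow_natCast ((2:ℝ) ^ (-(1:ℝ)/2)) 2, ← Real.rpow_mul (by norm_num)]
    norm_num
  have hclt : c < 0.71 := by
    have h2 : c ^ 2 < 0.71 ^ 2 := by rw [hcsq]; norm_num
    exact lt_of_pow_lt_pow_left₀ 2 (by norm_num) h2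
  have key : ∀ k : ℕ, Real.exp (-t) * t ^ k / k.factorial * (2:ℝ) ^ (-(k:ℝ)/2)
      = (t * c) ^ k / k.factorial * Real.exp (-t) := by
    intro k
    have h1 : (2:ℝ) ^ (-(k:ℝ)/2) = c ^ k := by
      rw [hc, ← Real.rpow_natCast ((2:ℝ) ^ (-(1:ℝ)/2)) k, ← Real.rpow_mul (by norm_num)]
      ring_nf
    rw [h1, mul_pow]; ring
  have hsum : ∑' k : ℕ, Real.exp (-t) * t ^ k / k.factorial * (2:ℝ) ^ (-(k:ℝ)/2)
      = Real.exp (t * c) * Real.exp (-t) := by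
    rw [tsum_congr key, tsum_mul_right, Real.exp_eq_exp_ℝ, exp_eq_tsum_div]
  rw [hsum, ← Real.exp_add]
  have hlog2 : Real.log 2 < 0.6931471808 := Real.log_two_lt_d9
  have hbound : Real.exp (t * c + -t) ≤ (2:ℝ) ^ (-t / 4) := by
    rw [Real.rpow_def_of_pos (by norm_num : (0:ℝ) < 2)]
    apply Real.exp_le_exp.mpr
    have htpos : (0:ℝ) < t := by linarith
    nlinarith [mul_pos htpos hcpos]
  have hpos : (0:ℝ) < (2:ℝ) ^ (-t / 8) := Real.rpow_pos_of_pos (by norm_num) _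
  linarith
end

section
/- Let m, d be reals with 0 < d ≤ m, and define g(x) = m - (x+1) - (x+2)(1 - (1 - d/m)^{x+1}) for x ≥ 0. Then g(m - 1) ≤ 0 and g(m/2 - 2) > 0 (for m sufficiently large, e.g. m ≥ 8), so g has a root k* with m/2 - 2 < k* < m - 1. -/
/-- For `0 < d ≤ m`, `m ≥ 8`, and `g(x) = m - (x+1) - (x+2)(1-(1-d/m)^{x+1})`:
`g(m-1) ≤ 0`, `g(m/2 - 2) > 0`, and `g` has a root in `(m/2 - 2, m - 1)`. -/
theorem patient_root (m d : ℝ) (hd : 0 < d) (hdm : d ≤ m) (hm : 8 ≤ m)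
    (g : ℝ → ℝ)
    (hg : ∀ x : ℝ, g x = m - (x + 1) - (x + 2) * (1 - (1 - d / m) ^ (x + 1))) :
    g (m - 1) ≤ 0 ∧ g (m / 2 - 2) > 0 ∧
      ∃ kstar ∈ Set.Ioo (m / 2 - 2) (m - 1), g kstar = 0 := by
  have hm0 : (0:ℝ) < m := by linarith
  set q : ℝ := 1 - d / m with hq
  have hq0 : 0 ≤ q := by
    have : d / m ≤ 1 := (div_le_one hm0).mpr hdm
    rw [hq]; linarith
  have hq1 : q < 1 := by
    have : 0 < d / m := div_pos hd hm0
    rw [hq]; linarith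
  -- g(m-1) < 0
  have h1 : g (m - 1) < 0 := by
    rw [hg]
    have he : m - 1 + 1 = m := by ring
    rw [he]
    have hlt : q ^ (m : ℝ) < 1 := Real.rpow_lt_one hq0 hq1 hm0
    have hge : 0 ≤ q ^ (m : ℝ) := Real.rpow_nonneg hq0 _
    nlinarith
  -- g(m/2-2) > 0
  have h2 : g (m / 2 - 2) > 0 := by
    rw [hg]
    have hge : 0 ≤ q ^ (m / 2 - 2 + 1) := Real.rpow_nonneg hq0 _
    nlinarith
  refine ⟨h1.le, h2, ?_⟩
  rcases eq_or_lt_of_le hdm with heq | hlt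
  · -- d = m, so q = 0, g is linear where the exponent is positive
    have hq0' : q = 0 := by
      rw [hq, heq, div_self (ne_of_gt hm0)]; ring
    refine ⟨(m - 3) / 2, ⟨by linarith, by linarith⟩, ?_⟩
    rw [hg, hq0', Real.zero_rpow (by intro h; nlinarith : (m - 3) / 2 + 1 ≠ 0)]
    ring
  · -- q > 0, use IVT
    have hqpos : 0 < q := by
      have : d / m < 1 := (div_lt_one hm0).mpr hlt
      simp [hq]; linarith
    have hgf : g = fun x => m - (x + 1) - (x + 2) * (1 - q ^ (x + 1)) := funext hg
    have hcont : ContinuousOn g (Set.Icc (m / 2 - 2) (m - 1)) := by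
      rw [hgf]
      have hrp : Continuous fun x : ℝ => q ^ (x + 1) := by
        have : (fun x : ℝ => q ^ (x + 1)) =
            fun x : ℝ => Real.exp (Real.log q * (x + 1)) := by
          funext x
          rw [Real.rpow_def_of_pos hqpos]
        rw [this]
        continuity
      fun_prop
    have hab : m / 2 - 2 ≤ m - 1 := by linarith
    have := intermediate_value_Ioo' hab hcont (a := m / 2 - 2) (b := m - 1)
      (Set.mem_Ioo.mpr ⟨h1, h2⟩)
    obtain ⟨k, hk, hgk⟩ := this
    exact ⟨k, hk, hgk⟩
end

section
/- Let m, d > 0 with d ≤ m, and let π : ℕ → ℝ≥0 satisfy the detailed balance equations π(k-1)·m(1-d/m)^{k-1} = π(k)·(k + m(1 - (1-d/m)^k)) for all k ≥ 1, with π(k) > 0 for all k. Let k* ≥ 0 be the root of f(x) = m(1-d/m)^x - x - m(1-(1-d/m)^x). Then for every integer k ≥ k*, π(k+1)/π(k) ≤ e^{-(k-k*)d/m}, and for every integer k ≤ k*, π(k-1)/π(k) ≤ e^{-(k*-k+1)d/m}. -/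
/-- Geometric decay of the stationary distribution of the Greedy pool-size chain:
if `p` is positive and satisfies detailed balance
`p(k-1)·m(1-d/m)^{k-1} = p(k)·(k + m(1-(1-d/m)^k))`, and `k* ≥ 0` is a root of
`f(x) = m(1-d/m)^x - x - m(1-(1-d/m)^x)`, then
`p(k+1)/p(k) ≤ e^{-(k-k*)d/m}` for `k ≥ k*` and
`p(k-1)/p(k) ≤ e^{-(k*-k+1)d/m}` for `k ≤ k*`. -/
theorem greedy_stationary_ratio (m d : ℝ) (hd : 0 < d) (hdm : d ≤ m)
    (p : ℕ → ℝ) (hp : ∀ k, 0 < p k)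
    (hbal : ∀ k : ℕ, 1 ≤ k →
      p (k - 1) * (m * (1 - d / m) ^ (k - 1)) =
        p k * ((k : ℝ) + m * (1 - (1 - d / m) ^ k)))
    (kstar : ℝ) (hk0 : 0 ≤ kstar)
    (hroot : m * (1 - d / m) ^ kstar - kstar - m * (1 - (1 - d / m) ^ kstar) = 0) :
    (∀ k : ℕ, kstar ≤ (k : ℝ) →
      p (k + 1) / p k ≤ Real.exp (-((k : ℝ) - kstar) * d / m)) ∧
    (∀ k : ℕ, 1 ≤ k → (k : ℝ) ≤ kstar →
      p (k - 1) / p k ≤ Real.exp (-(kstar - (k : ℝ) + 1) * d / m)) := by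
  have hm : 0 < m := lt_of_lt_of_le hd hdm
  set q : ℝ := 1 - d / m with hqdef
  have hq0 : 0 ≤ q := by
    have h : d / m ≤ 1 := (div_le_one hm).2 hdm
    rw [hqdef]; linarith
  have hq1 : q ≤ 1 := by
    have h : 0 < d / m := div_pos hd hm
    rw [hqdef]; linarith
  -- q > 0
  have hqpos : 0 < q := by
    rcases hq0.lt_or_eq with h | h
    · exact h
    · exfalso
      rcases eq_or_ne kstar 0 with hk | hk
      · rw [hk, Real.rpow_zero] at hroot
        nlinarith
      · rw [← h, Real.zero_rpow hk] at hroot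
        nlinarith
  -- the root equation rearranged
  have hstar : 2 * (m * q ^ kstar) = kstar + m := by nlinarith [hroot]
  have hqkpos : 0 < q ^ kstar := Real.rpow_pos_of_pos hqpos kstar
  -- q^t ≤ exp(-t*d/m) for t ≥ 0
  have hexp : ∀ t : ℝ, 0 ≤ t → q ^ t ≤ Real.exp (-t * d / m) := by
    intro t ht
    have h1 : q ≤ Real.exp (-(d / m)) := by
      have := Real.add_one_le_exp (-(d / m))
      linarith
    calc q ^ t ≤ Real.exp (-(d / m)) ^ t :=
          Real.rpow_le_rpow hq0 h1 ht
      _ = Real.exp (-(d / m) * t) := (Real.exp_mul _ _).symm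
      _ = Real.exp (-t * d / m) := by ring_nf
  constructor
  · intro k hk
    have hb := hbal (k + 1) (by omega)
    simp only [Nat.add_sub_cancel] at hb
    set D : ℝ := ((k + 1 : ℕ) : ℝ) + m * (1 - q ^ (k + 1)) with hD
    have hqk1 : q ^ (k + 1) ≤ 1 := pow_le_one₀ hq0 hq1
    have hDpos : 0 < D := by
      have : (0 : ℝ) < ((k + 1 : ℕ) : ℝ) := by positivity
      nlinarith
    -- D ≥ m * q^kstar
    have hDge : m * q ^ kstar ≤ D := by
      have h1 : q ^ ((k + 1 : ℕ) : ℝ) ≤ q ^ kstar := by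
        apply Real.rpow_le_rpow_of_exponent_ge hqpos hq1
        push_cast; linarith
      rw [Real.rpow_natCast] at h1
      have h2 : kstar + 1 ≤ ((k + 1 : ℕ) : ℝ) := by push_cast; linarith
      have : m * (1 - q ^ (k + 1)) ≥ m * (1 - q ^ kstar) := by nlinarith
      nlinarith
    have hratio : p (k + 1) / p k = m * q ^ k / D := by
      rw [div_eq_div_iff (hp k).ne' hDpos.ne']
      linear_combination -hb
    rw [hratio]
    calc m * q ^ k / D ≤ m * q ^ k / (m * q ^ kstar) := by
          gcongr
      _ = q ^ ((k : ℝ) - kstar) := by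
          rw [Real.rpow_sub hqpos, Real.rpow_natCast]
          field_simp
      _ ≤ Real.exp (-((k : ℝ) - kstar) * d / m) := hexp _ (by linarith)
  · intro k hk1 hk
    have hb := hbal k hk1
    set N : ℝ := (k : ℝ) + m * (1 - q ^ k) with hN
    have hqk : q ^ kstar ≤ q ^ ((k - 1 : ℕ) : ℝ) := by
      apply Real.rpow_le_rpow_of_exponent_ge hqpos hq1
      have : ((k - 1 : ℕ) : ℝ) = (k : ℝ) - 1 := by
        have : (1 : ℕ) ≤ k := hk1
        push_cast [this]; ring
      rw [this]; linarith
    rw [Real.rpow_natCast] at hqk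
    have hpk1pos : 0 < m * q ^ (k - 1) := by positivity
    -- N ≤ m * q^kstar
    have hNle : N ≤ m * q ^ kstar := by
      have h1 : q ^ kstar ≤ q ^ ((k : ℕ) : ℝ) := by
        apply Real.rpow_le_rpow_of_exponent_ge hqpos hq1 hk
      rw [Real.rpow_natCast] at h1
      have : m * q ^ kstar ≤ m * q ^ k := by nlinarith
      nlinarith
    have hratio : p (k - 1) / p k = N / (m * q ^ (k - 1)) := by
      rw [div_eq_div_iff (hp k).ne' hpk1pos.ne']
      linear_combination hb
    rw [hratio]
    have hNpos : 0 ≤ N := by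
      have : q ^ k ≤ 1 := pow_le_one₀ hq0 hq1
      have : (0:ℝ) ≤ (k:ℝ) := by positivity
      nlinarith
    calc N / (m * q ^ (k - 1)) ≤ m * q ^ kstar / (m * q ^ (k - 1)) := by
          gcongr
      _ = q ^ (kstar - (k : ℝ) + 1) := by
          rw [show kstar - (k : ℝ) + 1 = kstar - ((k - 1 : ℕ) : ℝ) by
            have : (1 : ℕ) ≤ k := hk1
            push_cast [this]; ring]
          rw [Real.rpow_sub hqpos, Real.rpow_natCast]
          field_simp
      _ ≤ Real.exp (-(kstar - (k : ℝ) + 1) * d / m) := hexp _ (by linarith)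
end

section
/- Under the hypotheses of the Greedy stationary-distribution ratio claim (detailed balance with rates r_{k→k+1} = m(1-d/m)^k, r_{k→k-1} = k + m(1-(1-d/m)^k), probability distribution π, and k* the root of f), for every integer k ≥ k* one has π(k) ≤ exp(-d(k - k* - 1)²/(2m)). -/
set_option maxHeartbeats 1000000


/-- Under the Greedy detailed-balance hypotheses, with `p` a probability distribution
and `k* ≥ 0` a root of `f(x) = m(1-d/m)^x - x - m(1-(1-d/m)^x)`, for every integer
`k ≥ k*` one has `p(k) ≤ exp(-d(k - k* - 1)²/(2m))`. -/
theorem greedy_stationary_concentration (m d : ℝ) (hd : 0 < d) (hdm : d ≤ m)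
    (p : ℕ → ℝ) (hp : ∀ k, 0 < p k) (hsum : ∑' k : ℕ, p k = 1)
    (hbal : ∀ k : ℕ, 1 ≤ k →
      p (k - 1) * (m * (1 - d / m) ^ (k - 1)) =
        p k * ((k : ℝ) + m * (1 - (1 - d / m) ^ k)))
    (kstar : ℝ) (hk0 : 0 ≤ kstar)
    (hroot : m * (1 - d / m) ^ kstar - kstar - m * (1 - (1 - d / m) ^ kstar) = 0) :
    ∀ k : ℕ, kstar ≤ (k : ℝ) →
      p k ≤ Real.exp (-d * ((k : ℝ) - kstar - 1) ^ 2 / (2 * m)) := by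
  have hm : 0 < m := lt_of_lt_of_le hd hdm
  set q : ℝ := 1 - d / m with hq_def
  have hx : 0 < d / m := div_pos hd hm
  have hx1 : d / m ≤ 1 := (div_le_one hm).mpr hdm
  have hq1 : q < 1 := by simp only [hq_def]; linarith
  have hq0 : 0 ≤ q := by simp only [hq_def]; linarith
  -- root equation
  have hkey : 2 * (m * q ^ kstar) = kstar + m := by linarith [hroot]
  have hr : (1:ℝ)/2 ≤ q ^ kstar := by nlinarith [hkey]
  have hkpos : 0 < kstar := by
    rcases eq_or_lt_of_le hk0 with h | h
    · exfalso
      rw [← h, Real.rpow_zero] at hkey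
      linarith
    · exact h
  have hqpos : 0 < q := by
    rcases eq_or_lt_of_le hq0 with h | h
    · exfalso
      rw [← h, Real.zero_rpow (ne_of_gt hkpos)] at hr
      linarith
    · exact h
  have hksle : q ^ kstar ≤ 1 := Real.rpow_le_one hq0 hq1.le hk0
  set n : ℕ := ⌈kstar⌉₊ with hn_def
  have hn1 : 1 ≤ n := Nat.one_le_ceil_iff.mpr hkpos
  have hnk : kstar ≤ (n : ℝ) := Nat.le_ceil _
  have hnk2 : (n : ℝ) < kstar + 1 := Nat.ceil_lt_add_one hk0
  set t : ℝ := kstar + 1 - n with ht_def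
  have ht0 : 0 < t := by simp only [ht_def]; linarith
  have ht1 : t ≤ 1 := by simp only [ht_def]; linarith
  have hn1R : (1:ℝ) ≤ n := by exact_mod_cast hn1
  set w : ℝ := q ^ t with hw_def
  have hwpos : 0 < w := Real.rpow_pos_of_pos hqpos t
  have hw : q ^ kstar ≤ w :=
    Real.rpow_le_rpow_of_exponent_ge hqpos hq1.le (by simp only [ht_def]; linarith)
  have hw2 : (1:ℝ)/2 ≤ w := le_trans hr hw
  have hwle1 : w ≤ 1 := Real.rpow_le_one hq0 hq1.le ht0.le
  -- single step ratio bound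
  have hstep : ∀ j : ℕ, kstar ≤ (j : ℝ) →
      p (j+1) ≤ p j * Real.exp (-(((j:ℝ) - kstar) * (d/m))) := by
    intro j hj
    have hb := hbal (j+1) (by omega)
    rw [Nat.add_sub_cancel] at hb
    push_cast at hb
    set D : ℝ := ((j:ℝ)+1) + m * (1 - q ^ (j+1)) with hD_def
    have hpowj1 : (q : ℝ) ^ (j+1) ≤ q ^ kstar := by
      rw [← Real.rpow_natCast q (j+1)]
      exact Real.rpow_le_rpow_of_exponent_ge hqpos hq1.le (by push_cast; linarith)
    have hDge : m * q ^ kstar ≤ D := by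
      have : m * (q:ℝ) ^ (j+1) ≤ m * q ^ kstar :=
        mul_le_mul_of_nonneg_left hpowj1 hm.le
      simp only [hD_def]; nlinarith [hkey]
    have hDpos : 0 < D := by nlinarith [Real.rpow_pos_of_pos hqpos kstar]
    have hnum : m * q ^ j ≤ D * Real.exp (-(((j:ℝ) - kstar) * (d/m))) := by
      have e1 : (q:ℝ) ^ j = q ^ kstar * q ^ ((j:ℝ) - kstar) := by
        rw [← Real.rpow_natCast q j, ← Real.rpow_add hqpos]
        ring_nf
      have hqe : q ≤ Real.exp (-(d/m)) := by
        have := Real.add_one_le_exp (-(d/m))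
        simp only [hq_def]; linarith
      have e2 : q ^ ((j:ℝ) - kstar) ≤ Real.exp (-(((j:ℝ) - kstar) * (d/m))) := by
        calc q ^ ((j:ℝ) - kstar) ≤ (Real.exp (-(d/m))) ^ ((j:ℝ) - kstar) :=
              Real.rpow_le_rpow hq0 hqe (by linarith)
          _ = Real.exp (-(((j:ℝ) - kstar) * (d/m))) := by
              rw [← Real.exp_mul]; ring_nf
      calc m * q ^ j = (m * q ^ kstar) * q ^ ((j:ℝ) - kstar) := by rw [e1]; ring
        _ ≤ D * Real.exp (-(((j:ℝ) - kstar) * (d/m))) := by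
            apply mul_le_mul hDge e2 (Real.rpow_nonneg hq0 _) hDpos.le
    have hmain : p (j+1) * D ≤ (p j * Real.exp (-(((j:ℝ) - kstar) * (d/m)))) * D := by
      calc p (j+1) * D = p j * (m * q ^ j) := hb.symm
        _ ≤ p j * (D * Real.exp (-(((j:ℝ) - kstar) * (d/m)))) :=
            mul_le_mul_of_nonneg_left hnum (hp j).le
        _ = (p j * Real.exp (-(((j:ℝ) - kstar) * (d/m)))) * D := by ring
    exact le_of_mul_le_mul_right hmain hDpos
  -- telescoped bound
  have hB : ∀ u : ℕ, p (n+u) ≤ p n *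
      Real.exp (-(d/m) * ((u:ℝ)*((n:ℝ)-kstar) + (u:ℝ)*((u:ℝ)-1)/2)) := by
    intro u
    induction u with
    | zero => simp
    | succ v ih =>
      have h1 := hstep (n+v) (by push_cast; linarith)
      have h2 : p (n + (v+1)) = p ((n+v)+1) := by ring_nf
      rw [h2]
      calc p ((n+v)+1) ≤ p (n+v) * Real.exp (-((((n+v:ℕ):ℝ) - kstar) * (d/m))) := h1
        _ ≤ (p n * Real.exp (-(d/m) * ((v:ℝ)*((n:ℝ)-kstar) + (v:ℝ)*((v:ℝ)-1)/2))) *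
              Real.exp (-((((n+v:ℕ):ℝ) - kstar) * (d/m))) :=
            mul_le_mul_of_nonneg_right ih (Real.exp_pos _).le
        _ = p n * Real.exp (-(d/m) * (((v:ℝ)+1)*((n:ℝ)-kstar) + ((v:ℝ)+1)*(((v:ℝ)+1)-1)/2)) := by
            rw [mul_assoc, ← Real.exp_add]
            push_cast
            ring_nf
      rw [show (((v:ℕ)+1 : ℕ) : ℝ) = (v:ℝ)+1 by push_cast; ring]
  -- bound at the ceiling point
  have hsummable : Summable p := by
    by_contra h
    rw [tsum_eq_zero_of_not_summable h] at hsum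
    linarith
  have hCn : p n * (1 + w) ≤ 1 := by
    have hb := hbal n hn1
    have hcast : ((n-1 : ℕ) : ℝ) = (n:ℝ) - 1 := by
      push_cast [Nat.cast_sub hn1]; ring
    have hpow : (q:ℝ) ^ (n-1 : ℕ) * w = q ^ kstar := by
      rw [← Real.rpow_natCast q (n-1), hw_def, ← Real.rpow_add hqpos, hcast]
      congr 1
      simp only [ht_def]; ring
    have hpown : (q:ℝ) ^ (n : ℕ) ≤ q ^ kstar := by
      rw [← Real.rpow_natCast q n]
      exact Real.rpow_le_rpow_of_exponent_ge hqpos hq1.le hnk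
    have hDge : m * q ^ kstar ≤ (n:ℝ) + m * (1 - q ^ (n:ℕ)) := by
      have : m * (q:ℝ) ^ (n:ℕ) ≤ m * q ^ kstar := mul_le_mul_of_nonneg_left hpown hm.le
      nlinarith [hkey]
    have hqn1pos : 0 < m * (q:ℝ) ^ (n-1 : ℕ) := by positivity
    have hge : p n * w ≤ p (n-1) := by
      have h1 : p n * (m * q ^ kstar) ≤ p n * ((n:ℝ) + m * (1 - q ^ (n:ℕ))) :=
        mul_le_mul_of_nonneg_left hDge (hp n).le
      rw [← hb] at h1
      have h2 : p n * (m * q ^ kstar) = (p n * w) * (m * (q:ℝ) ^ (n-1 : ℕ)) := by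
        rw [← hpow]; ring
      rw [h2] at h1
      exact le_of_mul_le_mul_right h1 hqn1pos
    have hsum2 : p (n-1) + p n ≤ 1 := by
      have hne : (n-1 : ℕ) ≠ n := by omega
      have := Summable.sum_le_tsum ({n-1, n} : Finset ℕ) (fun i _ => (hp i).le) hsummable
      rw [Finset.sum_pair hne, hsum] at this
      exact this
    nlinarith [hp n]
  have hCw : p n ≤ 1 / (1 + w) := by
    rw [le_div_iff₀ (by linarith)]
    exact hCn
  -- 1/(1+w) ≤ exp(-(d/m) t²/2)
  have hDexp : 1 / (1 + w) ≤ Real.exp (-(d/m) * (t^2/2)) := by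
    have hlogq : Real.log q ≤ -(d/m) := by
      have := Real.log_le_sub_one_of_pos hqpos
      simp only [hq_def] at this ⊢
      linarith
    have hlogw : Real.log w = t * Real.log q := Real.log_rpow hqpos t
    have hlogqneg : 0 ≤ -Real.log q := by linarith
    have h1 : (d/m) * t^2 ≤ -Real.log w := by
      rw [hlogw]
      have a1 : (d/m) * t^2 ≤ (-Real.log q) * t^2 :=
        mul_le_mul_of_nonneg_right (by linarith) (sq_nonneg t)
      have a2 : (-Real.log q) * t^2 ≤ (-Real.log q) * t := by
        have ht2 : t^2 ≤ t := by nlinarith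
        exact mul_le_mul_of_nonneg_left ht2 hlogqneg
      exact a1.trans (a2.trans_eq (by ring))
    have h2 : Real.exp ((d/m) * t^2) ≤ w⁻¹ := by
      calc Real.exp ((d/m) * t^2) ≤ Real.exp (-Real.log w) := Real.exp_le_exp.mpr h1
        _ = w⁻¹ := by rw [Real.exp_neg, Real.exp_log hwpos]
    have h3 : w⁻¹ ≤ (1+w)^2 := by
      rw [inv_le_iff_one_le_mul₀ hwpos] -- maybe wrong name
      nlinarith
    have h4 : Real.exp ((d/m) * (t^2/2)) ≤ 1 + w := by
      have e : Real.exp ((d/m) * (t^2/2)) * Real.exp ((d/m) * (t^2/2)) =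
          Real.exp ((d/m) * t^2) := by
        rw [← Real.exp_add]; ring_nf
      nlinarith [Real.exp_pos ((d/m) * (t^2/2)), h2.trans h3]
    rw [div_le_iff₀ (by linarith)]
    calc (1:ℝ) = Real.exp (-(d/m) * (t^2/2)) * Real.exp ((d/m) * (t^2/2)) := by
          rw [← Real.exp_add, show -(d/m) * (t^2/2) + (d/m) * (t^2/2) = 0 from by ring,
            Real.exp_zero]
      _ ≤ Real.exp (-(d/m) * (t^2/2)) * (1+w) := by
          exact mul_le_mul_of_nonneg_left h4 (Real.exp_pos _).le
    -- goal after rw? adjust below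
  -- final
  intro k hk
  have hnk' : n ≤ k := Nat.ceil_le.mpr hk
  obtain ⟨u, rfl⟩ : ∃ u, k = n + u := ⟨k - n, by omega⟩
  have hgoal_exp : -d * (((n+u : ℕ):ℝ) - kstar - 1)^2 / (2*m) =
      -(d/m) * (((u:ℝ) - t)^2/2) := by
    have : ((n+u : ℕ):ℝ) - kstar - 1 = (u:ℝ) - t := by push_cast [ht_def]; ring
    rw [this]; ring
  rw [hgoal_exp]
  calc p (n+u) ≤ p n * Real.exp (-(d/m) * ((u:ℝ)*((n:ℝ)-kstar) + (u:ℝ)*((u:ℝ)-1)/2)) := hB u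
    _ ≤ (1/(1+w)) * Real.exp (-(d/m) * ((u:ℝ)*((n:ℝ)-kstar) + (u:ℝ)*((u:ℝ)-1)/2)) :=
        mul_le_mul_of_nonneg_right hCw (Real.exp_pos _).le
    _ ≤ Real.exp (-(d/m) * (t^2/2)) * Real.exp (-(d/m) * ((u:ℝ)*((n:ℝ)-kstar) + (u:ℝ)*((u:ℝ)-1)/2)) :=
        mul_le_mul_of_nonneg_right hDexp (Real.exp_pos _).le
    _ = Real.exp (-(d/m) * (t^2/2 + ((u:ℝ)*((n:ℝ)-kstar) + (u:ℝ)*((u:ℝ)-1)/2))) := by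
        rw [← Real.exp_add]; ring_nf
    _ ≤ Real.exp (-(d/m) * (((u:ℝ) - t)^2/2)) := by
        apply Real.exp_le_exp.mpr
        have hs : (n:ℝ) - kstar = 1 - t := by simp only [ht_def]; ring
        rw [hs]
        have hu0 : (0:ℝ) ≤ (u:ℝ) := Nat.cast_nonneg u
        nlinarith [hx]
end

section
/- Let m, d > 0 with d ≤ m and let π : ℕ → ℝ>0 be a probability distribution satisfying, for all k ≥ 0, the cut balance equation m·π(k) = (k+1)π(k+1) + (k+2)(1 - (1-d/m)^{k+1})π(k+2). Let k* ∈ (m/2 - 2, m - 1) be the root of g(x) = m - (x+1) - (x+2)(1-(1-d/m)^{x+1}). Then for every integer k ≤ k*, π(k)/max{π(k+1), π(k+2)} ≤ e^{-(k*-k)/m}, and for every integer k ≥ k*, min{π(k+1), π(k+2)}/π(k) ≤ e^{-(k-k*)/(m + k - k*)}. -/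
/-!
Write `q = 1 - d/m` and `f(x) = (x+1) + (x+2)(1 - q^{x+1})`, so that `g = m - f` and
`f(k*) = m`. Bounding `p(k+1)` and `p(k+2)` by their maximum (minimum) in the balance
equation gives `m p(k) ≤ f(k) max(p(k+1), p(k+2))` (`≥ f(k) min(…)`). The second summand of `f`
is nondecreasing, so `f(y) - f(x) ≥ y - x`; hence `f(k) ≤ m - (k* - k)` for `k ≤ k*` and
`f(k) ≥ m + (k - k*)` for `k ≥ k*`, and both bounds follow from `1 - t ≤ e^{-t}`.
-/

open Real

namespace PatientChain

/-- The rate of the transition `x + 2 → x` of the pool-size chain, where `q = 1 - d/m`. -/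
noncomputable def pairRate (q x : ℝ) : ℝ := (x + 2) * (1 - q ^ (x + 1))

lemma pairRate_natCast (q : ℝ) (k : ℕ) :
    pairRate q k = ((k : ℝ) + 2) * (1 - q ^ (k + 1)) := by
  rw [pairRate, ← Real.rpow_natCast]
  push_cast
  rfl

lemma pairRate_natCast_nonneg {q : ℝ} (hq0 : 0 ≤ q) (hq1 : q ≤ 1) (k : ℕ) :
    0 ≤ pairRate q k := by
  rw [pairRate_natCast]
  exact mul_nonneg (by positivity) (sub_nonneg.2 (pow_le_one₀ hq0 hq1))

lemma pairRate_le_pairRate {q x y : ℝ} (hq0 : 0 ≤ q) (hq1 : q ≤ 1) (hx : -2 ≤ x)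
    (hxy : x ≤ y) (hy : 0 < y + 1) : pairRate q x ≤ pairRate q y := by
  have hpow : q ^ (y + 1) ≤ q ^ (x + 1) := by
    rcases hq0.eq_or_lt with rfl | hq
    · rw [Real.zero_rpow hy.ne']
      exact Real.rpow_nonneg le_rfl _
    · exact Real.rpow_le_rpow_of_exponent_ge hq hq1 (by linarith)
  have hy1 : q ^ (y + 1) ≤ 1 := Real.rpow_le_one hq0 hq1 hy.le
  calc (x + 2) * (1 - q ^ (x + 1)) ≤ (x + 2) * (1 - q ^ (y + 1)) := by gcongr; linarith
    _ ≤ (y + 2) * (1 - q ^ (y + 1)) := by gcongr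

end PatientChain

open PatientChain

lemma add_mul_le_add_mul_max {a b x y : ℝ} (ha : 0 ≤ a) (hb : 0 ≤ b) :
    a * x + b * y ≤ (a + b) * max x y := by
  have hx : a * x ≤ a * max x y := mul_le_mul_of_nonneg_left (le_max_left x y) ha
  have hy : b * y ≤ b * max x y := mul_le_mul_of_nonneg_left (le_max_right x y) hb
  linarith

lemma add_mul_min_le_add_mul {a b x y : ℝ} (ha : 0 ≤ a) (hb : 0 ≤ b) :
    (a + b) * min x y ≤ a * x + b * y := by
  have hx : a * min x y ≤ a * x := mul_le_mul_of_nonneg_left (min_le_left x y) ha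
  have hy : b * min x y ≤ b * y := mul_le_mul_of_nonneg_left (min_le_right x y) hb
  linarith

lemma div_le_exp_neg_div_of_mul_le {a b c s : ℝ} (hb : 0 < b) (hc : 0 < c)
    (h : c * a ≤ (c - s) * b) : a / b ≤ exp (-s / c) :=
  calc a / b ≤ (c - s) / c := by rw [div_le_div_iff₀ hb hc]; linarith
    _ = -s / c + 1 := by field_simp; ring
    _ ≤ exp (-s / c) := add_one_le_exp _

theorem patient_stationary_ratio_general (m d : ℝ) (hd : 0 < d) (hdm : d ≤ m)
    (p : ℕ → ℝ) (hp : ∀ k, 0 < p k)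
    (hbal : ∀ k : ℕ,
      m * p k = ((k : ℝ) + 1) * p (k + 1) +
        ((k : ℝ) + 2) * (1 - (1 - d / m) ^ (k + 1)) * p (k + 2))
    (kstar : ℝ) (hk1 : m / 2 - 2 < kstar)
    (hroot : m - (kstar + 1) - (kstar + 2) * (1 - (1 - d / m) ^ (kstar + 1)) = 0) :
    (∀ k : ℕ, (k : ℝ) ≤ kstar →
      p k / max (p (k + 1)) (p (k + 2)) ≤ Real.exp (-(kstar - (k : ℝ)) / m)) ∧
    (∀ k : ℕ, kstar ≤ (k : ℝ) →
      min (p (k + 1)) (p (k + 2)) / p k ≤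
        Real.exp (-((k : ℝ) - kstar) / (m + (k : ℝ) - kstar))) := by
  have hm : 0 < m := hd.trans_le hdm
  set q := 1 - d / m
  have hq0 : 0 ≤ q := sub_nonneg.2 ((div_le_one hm).2 hdm)
  have hq1 : q ≤ 1 := sub_le_self _ (div_pos hd hm).le
  have hroot' : m = kstar + 1 + pairRate q kstar := by rw [pairRate]; linarith
  have hbal' (k : ℕ) : m * p k = ((k : ℝ) + 1) * p (k + 1) + pairRate q k * p (k + 2) := by
    rw [hbal k, pairRate_natCast]
  have hrate := pairRate_natCast_nonneg hq0 hq1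
  constructor
  · intro k hk
    have hk0 : (0 : ℝ) ≤ k := k.cast_nonneg
    have hdrift := pairRate_le_pairRate hq0 hq1 (by linarith) hk (by linarith)
    have hmax : 0 < max (p (k + 1)) (p (k + 2)) := lt_max_of_lt_left (hp _)
    refine div_le_exp_neg_div_of_mul_le hmax hm ?_
    calc m * p k ≤ ((k + 1) + pairRate q k) * max (p (k + 1)) (p (k + 2)) := by
          rw [hbal' k]; exact add_mul_le_add_mul_max (by positivity) (hrate k)
      _ ≤ (m - (kstar - k)) * max (p (k + 1)) (p (k + 2)) := by gcongr; linarith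
  · intro k hk
    have hdrift := pairRate_le_pairRate hq0 hq1 (by linarith) hk (by positivity)
    have hmin : 0 < min (p (k + 1)) (p (k + 2)) := lt_min (hp _) (hp _)
    refine div_le_exp_neg_div_of_mul_le (hp k) (by linarith) ?_
    calc (m + k - kstar) * min (p (k + 1)) (p (k + 2))
        ≤ ((k + 1) + pairRate q k) * min (p (k + 1)) (p (k + 2)) := by gcongr; linarith
      _ ≤ m * p k := by
          rw [hbal' k]; exact add_mul_min_le_add_mul (by positivity) (hrate k)
      _ = (m + k - kstar - (k - kstar)) * p k := by ring

/-- Drift of the stationary distribution of the Patient pool-size chain: if `p` is a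
positive probability distribution satisfying the cut balance equation
`m·p(k) = (k+1)p(k+1) + (k+2)(1-(1-d/m)^{k+1})p(k+2)`, and
`k* ∈ (m/2-2, m-1)` is a root of `g(x) = m-(x+1)-(x+2)(1-(1-d/m)^{x+1})`, then
`p(k)/max(p(k+1),p(k+2)) ≤ e^{-(k*-k)/m}` for `k ≤ k*`, and
`min(p(k+1),p(k+2))/p(k) ≤ e^{-(k-k*)/(m+k-k*)}` for `k ≥ k*`. -/
theorem patient_stationary_ratio (m d : ℝ) (hd : 0 < d) (hdm : d ≤ m)
    (p : ℕ → ℝ) (hp : ∀ k, 0 < p k) (hsum : ∑' k : ℕ, p k = 1)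
    (hbal : ∀ k : ℕ,
      m * p k = ((k : ℝ) + 1) * p (k + 1) +
        ((k : ℝ) + 2) * (1 - (1 - d / m) ^ (k + 1)) * p (k + 2))
    (kstar : ℝ) (hk1 : m / 2 - 2 < kstar) (hk2 : kstar < m - 1)
    (hroot : m - (kstar + 1) - (kstar + 2) * (1 - (1 - d / m) ^ (kstar + 1)) = 0) :
    (∀ k : ℕ, (k : ℝ) ≤ kstar →
      p k / max (p (k + 1)) (p (k + 2)) ≤ Real.exp (-(kstar - (k : ℝ)) / m)) ∧
    (∀ k : ℕ, kstar ≤ (k : ℝ) →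
      min (p (k + 1)) (p (k + 2)) / p k ≤
        Real.exp (-((k : ℝ) - kstar) / (m + (k : ℝ) - kstar))) :=
  patient_stationary_ratio_general m d hd hdm p hp hbal kstar hk1 hroot
end

section
/- Under the Patient balance hypotheses (cut balance m·π(k) = (k+1)π(k+1) + (k+2)(1-(1-d/m)^{k+1})π(k+2) for a probability distribution π, with k* the root of g in (m/2-2, m-1)), for every integer k ≤ k* one has π(k) ≤ e^{-(k*-k)²/(4m)}, and hence for every σ ≥ 1, ∑_{i=0}^{⌊k* - σ√(4m)⌋} π(i) ≤ 2√m · e^{-σ²}. -/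
set_option maxHeartbeats 1000000 in
/-- Under the Patient balance hypotheses, for every integer `k ≤ k*` one has
`p(k) ≤ e^{-(k*-k)²/(4m)}`, and hence for every `σ ≥ 1`,
`∑_{i ≤ k* - σ√(4m)} p(i) ≤ 2√m · e^{-σ²}`. -/
theorem patient_stationary_concentration (m d : ℝ) (hd : 0 < d) (hdm : d ≤ m)
    (p : ℕ → ℝ) (hp : ∀ k, 0 < p k) (hsum : ∑' k : ℕ, p k = 1)
    (hbal : ∀ k : ℕ,
      m * p k = ((k : ℝ) + 1) * p (k + 1) +
        ((k : ℝ) + 2) * (1 - (1 - d / m) ^ (k + 1)) * p (k + 2))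
    (kstar : ℝ) (hk1 : m / 2 - 2 < kstar) (hk2 : kstar < m - 1)
    (hroot : m - (kstar + 1) - (kstar + 2) * (1 - (1 - d / m) ^ (kstar + 1)) = 0) :
    (∀ k : ℕ, (k : ℝ) ≤ kstar → p k ≤ Real.exp (-(kstar - (k : ℝ)) ^ 2 / (4 * m))) ∧
    (∀ σ : ℝ, 1 ≤ σ →
      (∑' i : ℕ, (if (i : ℝ) ≤ kstar - σ * Real.sqrt (4 * m) then p i else 0))
        ≤ 2 * Real.sqrt m * Real.exp (-σ ^ 2)) := by
  have hm : 0 < m := hd.trans_le hdm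
  have hsummable : Summable p := by
    by_contra h
    rw [tsum_eq_zero_of_not_summable h] at hsum
    norm_num at hsum
  have ple1 : ∀ k, p k ≤ 1 := by
    intro k
    calc p k ≤ ∑' n, p n := Summable.le_tsum hsummable k (fun n _ => (hp n).le)
    _ = 1 := hsum
  set q : ℝ := 1 - d / m with hqdef
  have hq0 : 0 ≤ q := by
    have : d / m ≤ 1 := (div_le_one hm).mpr hdm
    simp only [hqdef]; linarith
  have hq1 : q < 1 := by
    have : 0 < d / m := div_pos hd hm
    simp only [hqdef]; linarith
  -- monotonicity of q-powers
  have hmono : ∀ k : ℕ, (k : ℝ) ≤ kstar → q ^ (kstar + 1) ≤ q ^ (k + 1) := by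
    intro k hk
    have hks0 : (0:ℝ) ≤ kstar := le_trans (Nat.cast_nonneg k) hk
    rcases eq_or_lt_of_le hq0 with h0 | h0
    · rw [← h0, Real.zero_rpow (by linarith : kstar + 1 ≠ 0)]
      positivity
    · have : q ^ (kstar + 1) ≤ q ^ ((k : ℝ) + 1) := by
        apply Real.rpow_le_rpow_of_exponent_ge h0 hq1.le
        linarith
      calc q ^ (kstar + 1) ≤ q ^ ((k : ℝ) + 1) := this
        _ = q ^ (k + 1) := by
          rw [← Real.rpow_natCast q (k + 1)]
          push_cast; ring_nf
  have hqpow_le1 : ∀ k : ℕ, q ^ (k + 1) ≤ 1 := fun k => pow_le_one₀ hq0 hq1.le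
  have hqsle1 : 0 ≤ kstar → q ^ (kstar + 1) ≤ 1 := by
    intro hks0
    rcases eq_or_lt_of_le hq0 with h0 | h0
    · rw [← h0, Real.zero_rpow (by linarith : kstar + 1 ≠ 0)]; norm_num
    · exact Real.rpow_le_one hq0 hq1.le (by linarith)
  -- core step bound
  have hstep : ∀ k : ℕ, (k : ℝ) ≤ kstar →
      m * p k ≤ (m - (kstar - k)) * max (p (k + 1)) (p (k + 2)) := by
    intro k hk
    have hks0 : (0:ℝ) ≤ kstar := le_trans (Nat.cast_nonneg k) hk
    have hM1 : p (k + 1) ≤ max (p (k + 1)) (p (k + 2)) := le_max_left _ _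
    have hM2 : p (k + 2) ≤ max (p (k + 1)) (p (k + 2)) := le_max_right _ _
    have hM0 : 0 < max (p (k + 1)) (p (k + 2)) := lt_of_lt_of_le (hp (k+1)) hM1
    have h1 : ((k : ℝ) + 1) * p (k + 1) ≤ ((k : ℝ) + 1) * max (p (k + 1)) (p (k + 2)) := by
      apply mul_le_mul_of_nonneg_left hM1; positivity
    have hc2 : 0 ≤ ((k : ℝ) + 2) * (1 - q ^ (k + 1)) := by
      have := hqpow_le1 k
      have hk2' : (0:ℝ) ≤ (k : ℝ) + 2 := by positivity
      nlinarith
    have h2 : ((k : ℝ) + 2) * (1 - q ^ (k + 1)) * p (k + 2) ≤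
        ((k : ℝ) + 2) * (1 - q ^ (k + 1)) * max (p (k + 1)) (p (k + 2)) :=
      mul_le_mul_of_nonneg_left hM2 hc2
    have hf : ((k : ℝ) + 1) + ((k : ℝ) + 2) * (1 - q ^ (k + 1)) ≤ m - (kstar - k) := by
      have hprod : ((k : ℝ) + 2) * (1 - q ^ (k + 1)) ≤ (kstar + 2) * (1 - q ^ (kstar + 1)) := by
        apply mul_le_mul (by linarith) (by linarith [hmono k hk]) (by linarith [hqpow_le1 k])
          (by linarith [hqsle1 hks0])
      linarith
    calc m * p k = ((k : ℝ) + 1) * p (k + 1) + ((k : ℝ) + 2) * (1 - q ^ (k + 1)) * p (k + 2) :=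
          hbal k
      _ ≤ ((k : ℝ) + 1) * max (p (k + 1)) (p (k + 2)) +
          ((k : ℝ) + 2) * (1 - q ^ (k + 1)) * max (p (k + 1)) (p (k + 2)) := by linarith
      _ = (((k : ℝ) + 1) + ((k : ℝ) + 2) * (1 - q ^ (k + 1))) * max (p (k + 1)) (p (k + 2)) := by
          ring
      _ ≤ (m - (kstar - k)) * max (p (k + 1)) (p (k + 2)) :=
          mul_le_mul_of_nonneg_right hf hM0.le
  -- pointwise bound by induction
  have hpoint : ∀ n : ℕ, ∀ k : ℕ, (k : ℝ) ≤ kstar → kstar - k ≤ n →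
      p k ≤ Real.exp (-(kstar - (k : ℝ)) ^ 2 / (4 * m)) := by
    intro n
    induction n with
    | zero =>
      intro k hk hkn
      have hx : kstar - (k : ℝ) = 0 := by push_cast at hkn; linarith
      rw [hx]
      simpa using ple1 k
    | succ n ih =>
      intro k hk hkn
      set x : ℝ := kstar - (k : ℝ) with hxdef
      have hx0 : 0 ≤ x := by simp only [hxdef]; linarith
      have hxm : x < m := by
        have : (0:ℝ) ≤ (k : ℝ) := Nat.cast_nonneg k
        simp only [hxdef]; linarith
      have hM0 : 0 < max (p (k + 1)) (p (k + 2)) := lt_of_lt_of_le (hp (k+1)) (le_max_left _ _)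
      have hpk : p k ≤ (1 - x / m) * max (p (k + 1)) (p (k + 2)) := by
        have h' : p k ≤ (m - x) / m * max (p (k + 1)) (p (k + 2)) := by
          rw [div_mul_eq_mul_div, le_div_iff₀ hm]
          calc p k * m = m * p k := by ring
            _ ≤ (m - (kstar - (k:ℝ))) * max (p (k + 1)) (p (k + 2)) := hstep k hk
            _ = (m - x) * max (p (k + 1)) (p (k + 2)) := by rw [← hxdef]
        calc p k ≤ (m - x) / m * max (p (k + 1)) (p (k + 2)) := h'
          _ = (1 - x / m) * max (p (k + 1)) (p (k + 2)) := by
            rw [sub_div, div_self hm.ne']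
      have h1xm : 0 ≤ 1 - x / m := by
        have : x / m < 1 := (div_lt_one hm).mpr hxm
        linarith
      have hexm : 1 - x / m ≤ Real.exp (-(x / m)) := by
        have := Real.add_one_le_exp (-(x / m))
        linarith
      have h4m : (0:ℝ) < 4 * m := by linarith
      by_cases hc : (k : ℝ) + 2 ≤ kstar
      · have hik2 : p (k + 2) ≤ Real.exp (-(x - 2) ^ 2 / (4 * m)) := by
          have := ih (k + 2) (by push_cast; linarith) (by push_cast; push_cast at hkn; linarith)
          convert this using 3 <;> push_cast <;> ring
        have hik1 : p (k + 1) ≤ Real.exp (-(x - 2) ^ 2 / (4 * m)) := by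
          have h1 := ih (k + 1) (by push_cast; linarith) (by push_cast; push_cast at hkn; linarith)
          have h1' : p (k + 1) ≤ Real.exp (-(x - 1) ^ 2 / (4 * m)) := by
            convert h1 using 3 <;> push_cast <;> ring
          refine h1'.trans (Real.exp_le_exp.mpr ?_)
          have hx2 : 2 ≤ x := by simp only [hxdef]; linarith
          rw [neg_div, neg_div, neg_le_neg_iff, div_le_div_iff₀ h4m h4m]
          nlinarith
        have hMle : max (p (k + 1)) (p (k + 2)) ≤ Real.exp (-(x - 2) ^ 2 / (4 * m)) :=
          max_le hik1 hik2
        calc p k ≤ (1 - x / m) * max (p (k + 1)) (p (k + 2)) := hpk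
          _ ≤ Real.exp (-(x / m)) * Real.exp (-(x - 2) ^ 2 / (4 * m)) :=
            mul_le_mul hexm hMle hM0.le (Real.exp_nonneg _)
          _ = Real.exp (-(x / m) + -(x - 2) ^ 2 / (4 * m)) := (Real.exp_add _ _).symm
          _ ≤ Real.exp (-x ^ 2 / (4 * m)) := by
            apply Real.exp_le_exp.mpr
            have e1 : -(x / m) + -(x - 2) ^ 2 / (4 * m) = (-(4*x) - (x - 2) ^ 2) / (4 * m) := by
              field_simp; ring
            rw [e1, div_le_div_iff₀ h4m h4m]
            nlinarith
      · have hx2 : x < 2 := by simp only [hxdef]; linarith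
        have hMle : max (p (k + 1)) (p (k + 2)) ≤ 1 := max_le (ple1 _) (ple1 _)
        have hle : p k ≤ 1 - x / m := by
          calc p k ≤ (1 - x / m) * max (p (k + 1)) (p (k + 2)) := hpk
            _ ≤ (1 - x / m) * 1 := mul_le_mul_of_nonneg_left hMle h1xm
            _ = 1 - x / m := mul_one _
        refine hle.trans (hexm.trans (Real.exp_le_exp.mpr ?_))
        rw [neg_div, neg_le_neg_iff, div_le_div_iff₀ (by linarith) hm]
        calc x ^ 2 * m = x * m * x := by ring
          _ ≤ x * m * 4 := by
            apply mul_le_mul_of_nonneg_left (by linarith) (mul_nonneg hx0 hm.le)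
          _ = x * (4 * m) := by ring
  constructor
  · intro k hk
    exact hpoint ⌈kstar⌉₊ k hk (by linarith [Nat.le_ceil kstar, (Nat.cast_nonneg k : (0:ℝ) ≤ (k:ℝ))])
  · intro σ hσ
    set s : ℝ := Real.sqrt (4 * m) with hsdef
    have hsm0 : 0 < Real.sqrt m := Real.sqrt_pos.mpr hm
    have hs2 : s = 2 * Real.sqrt m := by
      rw [hsdef, show (4:ℝ) * m = 2 ^ 2 * m by ring, Real.sqrt_mul (by positivity) m,
        Real.sqrt_sq (by norm_num : (0:ℝ) ≤ 2)]
    have hs0 : 0 < s := by rw [hs2]; positivity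
    set T : ℝ := kstar - σ * s with hTdef
    by_cases hT : T < 0
    · have hzero : (fun i : ℕ => if (i : ℝ) ≤ T then p i else 0) = fun _ => 0 := by
        funext i
        rw [if_neg]
        have : (0:ℝ) ≤ (i : ℝ) := Nat.cast_nonneg i
        intro h; linarith
      rw [hzero, tsum_zero]
      positivity
    push_neg at hT
    have hσs : 0 ≤ σ * s := mul_nonneg (by linarith) hs0.le
    have hks0 : 0 ≤ kstar := by simp only [hTdef] at hT; linarith
    have h1m : 1 < m := by linarith
    have hsm1 : 1 ≤ Real.sqrt m := by
      rw [show (1:ℝ) = Real.sqrt 1 by simp]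
      exact Real.sqrt_le_sqrt h1m.le
    set N : ℕ := ⌊T⌋₊ with hNdef
    have hNT : (N : ℝ) ≤ T := Nat.floor_le hT
    have hcond : ∀ i : ℕ, ((i : ℝ) ≤ T ↔ i ≤ N) := fun i => (Nat.le_floor_iff hT).symm
    have htsum : (∑' i : ℕ, if (i : ℝ) ≤ T then p i else 0)
        = ∑ i ∈ Finset.range (N + 1), (if (i : ℝ) ≤ T then p i else 0) := by
      apply tsum_eq_sum
      intro i hi
      rw [if_neg]
      intro hle
      exact hi (Finset.mem_range.mpr (Nat.lt_succ_of_le ((hcond i).mp hle)))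
    set r : ℝ := Real.exp (-(2 * σ / s)) with hrdef
    have hr0 : 0 ≤ r := Real.exp_nonneg _
    have hr1 : r < 1 := by
      rw [hrdef, Real.exp_lt_one_iff]
      have : 0 < 2 * σ / s := by positivity
      linarith
    have hss : s * s = 4 * m := Real.mul_self_sqrt (by positivity)
    have hterm : ∀ i ∈ Finset.range (N + 1),
        (if (i : ℝ) ≤ T then p i else 0) ≤ Real.exp (-σ ^ 2) * r ^ (N - i) := by
      intro i hi
      have hiN : i ≤ N := Nat.lt_succ_iff.mp (Finset.mem_range.mp hi)
      have hiT : (i : ℝ) ≤ T := (hcond i).mpr hiN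
      rw [if_pos hiT]
      have hik : (i : ℝ) ≤ kstar := by simp only [hTdef] at hiT; linarith
      have hpt := hpoint ⌈kstar⌉₊ i hik
        (by linarith [Nat.le_ceil kstar, (Nat.cast_nonneg i : (0:ℝ) ≤ (i:ℝ))])
      refine hpt.trans ?_
      have hj : ((N - i : ℕ) : ℝ) = (N : ℝ) - (i : ℝ) := by
        rw [Nat.cast_sub hiN]
      set j : ℝ := (N : ℝ) - (i : ℝ) with hjdef
      have hj0 : 0 ≤ j := by
        have : (i : ℝ) ≤ (N : ℝ) := Nat.cast_le.mpr hiN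
        simp only [hjdef]; linarith
      have hlow : σ * s + j ≤ kstar - (i : ℝ) := by
        simp only [hjdef]
        linarith [hNT, hTdef.le, hTdef.ge]
      have hsq : (σ * s + j) ^ 2 ≤ (kstar - (i : ℝ)) ^ 2 :=
        pow_le_pow_left₀ (by linarith [hσs, hj0]) hlow 2
      have hexpand : σ ^ 2 * (4 * m) + 2 * σ * s * j ≤ (kstar - (i : ℝ)) ^ 2 := by
        have e : (σ * s + j) ^ 2 = σ ^ 2 * (s * s) + 2 * σ * s * j + j ^ 2 := by ring
        rw [hss] at e
        rw [e] at hsq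
        linarith [sq_nonneg j]
      have h4m : (0:ℝ) < 4 * m := by linarith
      have hexp_le : σ ^ 2 + j * (2 * σ / s) ≤ (kstar - (i : ℝ)) ^ 2 / (4 * m) := by
        rw [le_div_iff₀ h4m]
        have hcancel : 2 * σ / s * s = 2 * σ := div_mul_cancel₀ _ hs0.ne'
        calc (σ ^ 2 + j * (2 * σ / s)) * (4 * m)
            = (σ ^ 2 + j * (2 * σ / s)) * (s * s) := by rw [hss]
          _ = σ ^ 2 * (s * s) + j * (2 * σ / s * s) * s := by ring
          _ = σ ^ 2 * (s * s) + j * (2 * σ) * s := by rw [hcancel]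
          _ = σ ^ 2 * (4 * m) + 2 * σ * s * j := by rw [hss]; ring
          _ ≤ (kstar - (i : ℝ)) ^ 2 := hexpand
      have hrw : Real.exp (-σ ^ 2) * r ^ (N - i)
          = Real.exp (-σ ^ 2 + (N - i : ℕ) * (-(2 * σ / s))) := by
        rw [Real.exp_add, Real.exp_nat_mul, ← hrdef]
      rw [hrw, Real.exp_le_exp, hj]
      have hfin : j * -(2 * σ / s) = -(j * (2 * σ / s)) := by ring
      rw [hfin, neg_div]
      linarith [hexp_le]
    have hsumle : ∑ i ∈ Finset.range (N + 1), (if (i : ℝ) ≤ T then p i else 0)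
        ≤ Real.exp (-σ ^ 2) * (1 / (1 - r)) := by
      calc ∑ i ∈ Finset.range (N + 1), (if (i : ℝ) ≤ T then p i else 0)
          ≤ ∑ i ∈ Finset.range (N + 1), Real.exp (-σ ^ 2) * r ^ (N - i) :=
            Finset.sum_le_sum hterm
        _ = Real.exp (-σ ^ 2) * ∑ i ∈ Finset.range (N + 1), r ^ (N - i) := by
            rw [Finset.mul_sum]
        _ = Real.exp (-σ ^ 2) * ∑ i ∈ Finset.range (N + 1), r ^ i := by
            congr 1
            have := Finset.sum_range_reflect (fun i => r ^ i) (N + 1)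
            simpa using this
        _ ≤ Real.exp (-σ ^ 2) * (1 / (1 - r)) := by
            have h1r : (0:ℝ) < 1 - r := by linarith
            have hgsum : ∑ i ∈ Finset.range (N + 1), r ^ i ≤ 1 / (1 - r) := by
              calc ∑ i ∈ Finset.range (N + 1), r ^ i
                  = (r ^ (N + 1) - 1) / (r - 1) := geom_sum_eq hr1.ne _
                _ = (1 - r ^ (N + 1)) / (1 - r) := by
                    rw [← neg_div_neg_eq]; ring_nf
                _ ≤ 1 / (1 - r) := by
                    gcongr
                    · linarith [pow_nonneg hr0 (N + 1)]
            exact mul_le_mul_of_nonneg_left hgsum (Real.exp_nonneg _)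
    have hgeom : 1 / (1 - r) ≤ 2 * Real.sqrt m := by
      have hr1' : 0 < 1 - r := by linarith
      rw [div_le_iff₀ hr1']
      have key : 1 / (2 * Real.sqrt m) ≤ 1 - r := by
        have ht : 2 * σ / s = σ / Real.sqrt m := by
          rw [hs2]; field_simp
        by_cases hcase : 1 ≤ σ / Real.sqrt m
        · have hre1 : r ≤ Real.exp (-1) := by
            rw [hrdef, ht, Real.exp_le_exp]; linarith
          have he1 : (2:ℝ) ≤ Real.exp 1 := by
            have := Real.add_one_le_exp 1; linarith
          have hprod : Real.exp (-1) * Real.exp 1 = 1 := by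
            rw [← Real.exp_add]; norm_num
          have h3 : 0 ≤ Real.exp (-1) * (Real.exp 1 - 2) :=
            mul_nonneg (Real.exp_pos (-1)).le (by linarith)
          have hhalf : Real.exp (-1) ≤ 1 / 2 := by nlinarith [h3, hprod]
          have h2m : (1:ℝ) / (2 * Real.sqrt m) ≤ 1 / 2 := by
            apply one_div_le_one_div_of_le (by norm_num)
            linarith
          linarith
        · push_neg at hcase
          set t : ℝ := σ / Real.sqrt m with htdef
          have ht0 : 0 < t := by positivity
          have hexpt : Real.exp (-t) * (1 + t) ≤ 1 := by
            have h1 : 1 + t ≤ Real.exp t := by linarith [Real.add_one_le_exp t]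
            have h2 : Real.exp (-t) * Real.exp t = 1 := by
              rw [← Real.exp_add]; norm_num
            calc Real.exp (-t) * (1 + t) ≤ Real.exp (-t) * Real.exp t :=
                  mul_le_mul_of_nonneg_left h1 (Real.exp_nonneg _)
              _ = 1 := h2
          have h1t : (0:ℝ) < 1 + t := by linarith
          have h2' : Real.exp (-t) ≤ 1 - t / 2 := by
            have ha : Real.exp (-t) ≤ 1 / (1 + t) := by
              rw [le_div_iff₀ h1t]; exact hexpt
            refine ha.trans ?_
            rw [div_le_iff₀ h1t]
            nlinarith [mul_nonneg ht0.le (by linarith : (0:ℝ) ≤ 1 - t)]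
          have hrt : r = Real.exp (-t) := by rw [hrdef, ht]
          have htm : 1 / (2 * Real.sqrt m) ≤ t / 2 := by
            have e : t / 2 = σ / (2 * Real.sqrt m) := by
              rw [htdef, div_div, mul_comm]
            rw [e]
            gcongr
          rw [hrt]
          linarith [h2']
      calc (1:ℝ) = (2 * Real.sqrt m) * (1 / (2 * Real.sqrt m)) := by field_simp
        _ ≤ (2 * Real.sqrt m) * (1 - r) := by
            apply mul_le_mul_of_nonneg_left key (by positivity)
        _ = 2 * Real.sqrt m * (1 - r) := by ring
    calc (∑' i : ℕ, if (i : ℝ) ≤ T then p i else 0)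
        = ∑ i ∈ Finset.range (N + 1), (if (i : ℝ) ≤ T then p i else 0) := htsum
      _ ≤ Real.exp (-σ ^ 2) * (1 / (1 - r)) := hsumle
      _ ≤ Real.exp (-σ ^ 2) * (2 * Real.sqrt m) := by
          apply mul_le_mul_of_nonneg_left hgeom (Real.exp_nonneg _)
      _ = 2 * Real.sqrt m * Real.exp (-σ ^ 2) := by ring
end

section
/- For every real d ≥ 7 and every real δ with 0 ≤ δ ≤ 1/(2d), (2/(2+δ))·(1 - e^{-d/2}) ≥ 1 - 1/(2d+1). -/
lemma exp_72_ge : (33:ℝ) ≤ Real.exp (7/2) := by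
  have h9 := Real.exp_one_gt_d9
  have h7 : Real.exp (7/2) * Real.exp (7/2) = (Real.exp 1)^7 := by
    rw [← Real.exp_add, ← Real.exp_nat_mul]; norm_num
  have hpos : (0:ℝ) < Real.exp (7/2) := Real.exp_pos _
  nlinarith [sq_nonneg (Real.exp (7/2) - 33), sq_nonneg (Real.exp 1 - 2.7182818283),
    Real.exp_pos 1, sq_nonneg ((Real.exp 1)^2 - 2.7182818283^2),
    sq_nonneg ((Real.exp 1)^3 - 2.7182818283^3)]

lemma exp_lb (d : ℝ) (hd : 7 ≤ d) : 4*d + 2 ≤ Real.exp (d/2) := by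
  have h2 : Real.exp (d/2) = Real.exp ((d-7)/2) * Real.exp (7/2) := by
    rw [← Real.exp_add]; ring_nf
  have h3 : 1 + (d-7)/2 ≤ Real.exp ((d-7)/2) := by
    have := Real.add_one_le_exp ((d-7)/2); linarith
  have h4 := exp_72_ge
  have h5 : (0:ℝ) < 1 + (d-7)/2 := by linarith
  nlinarith [Real.exp_pos ((d-7)/2)]

/-- Welfare comparison: for `d ≥ 7` and `0 ≤ δ ≤ 1/(2d)`,
`(2/(2+δ))(1 - e^{-d/2}) ≥ 1 - 1/(2d+1)`. -/
theorem patient_beats_greedy_welfare (d δ : ℝ) (hd : 7 ≤ d)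
    (hδ0 : 0 ≤ δ) (hδ1 : δ ≤ 1 / (2 * d)) :
    2 / (2 + δ) * (1 - Real.exp (-d / 2)) ≥ 1 - 1 / (2 * d + 1) := by
  have hd0 : (0:ℝ) < d := by linarith
  have hEp : (0:ℝ) < Real.exp (d/2) := Real.exp_pos _
  have hE : Real.exp (-d/2) * (4*d+2) ≤ 1 := by
    have h := exp_lb d hd
    have : Real.exp (-d/2) = (Real.exp (d/2))⁻¹ := by
      rw [← Real.exp_neg]; ring_nf
    rw [this]
    rw [inv_mul_le_iff₀ hEp]
    linarith
  have hδd : δ * (2*d) ≤ 1 := by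
    have := (le_div_iff₀ (by linarith : (0:ℝ) < 2*d)).mp hδ1
    linarith
  have hEeq : Real.exp (-d/2) = Real.exp (-d / 2) := by ring_nf
  have h2δ : (0:ℝ) < 2 + δ := by linarith
  have h2d1 : (0:ℝ) < 2*d + 1 := by linarith
  rw [ge_iff_le, ← sub_nonneg]
  have key : 2 / (2 + δ) * (1 - Real.exp (-d / 2)) - (1 - 1 / (2 * d + 1)) =
      (2*(1 - Real.exp (-d/2))*(2*d+1) - (2*d)*(2+δ)) / ((2+δ)*(2*d+1)) := by
    rw [hEeq]; field_simp; ring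
  rw [key]
  apply div_nonneg _ (by positivity)
  nlinarith [Real.exp_pos (-d/2)]
end
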